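/- A ring R is a (two-sided) PF ring — i.e., R is an injective cogenerator both as a right module and as a left module over itself — if and only if the free module R^2 has orthogonal equivalence: (X^⊥)^⊥ = X for every right submodule X ≤ (R^2)_R and every left submodule X ≤ _R(R^2), where orthogonals are taken via the identification (R^2)* ≅ R^2. -/

import Mathlib

universe u

section Perps

variable {R : Type u} [Ring R]

/-- `I^⊥` for a right submodule `I ≤ (R²)_R`, identifying `(R²)* ≅ R²` via
`x ↦ φ_x`, `φ_x(r₁,r₂) = x₁r₁ + x₂r₂`: a left submodule of `R²`. -/
def rPerp (I : Submodule Rᵐᵒᵖ (Fin 2 → R)) : Submodule R (Fin 2 → R) where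
  carrier := {x | ∀ r ∈ I, ∑ i, x i * r i = 0}
  add_mem' := by
    intro a b ha hb r hr
    simp only [Set.mem_setOf_eq, Pi.add_apply, add_mul, Finset.sum_add_distrib,
      ha r hr, hb r hr, add_zero]
  zero_mem' := by intro r hr; simp
  smul_mem' := by
    intro c x hx r hr
    simp only [Pi.smul_apply, smul_eq_mul, mul_assoc, ← Finset.mul_sum]
    rw [hx r hr, mul_zero]

/-- `X^⊥` for a left submodule `X ≤ _R(R²)` via `ψ_x(r₁,r₂) = r₁x₁ + r₂x₂`:
a right submodule of `R²`. -/
def lPerp (X : Submodule R (Fin 2 → R)) : Submodule Rᵐᵒᵖ (Fin 2 → R) where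
  carrier := {r | ∀ x ∈ X, ∑ i, x i * r i = 0}
  add_mem' := by
    intro a b ha hb x hx
    simp only [Set.mem_setOf_eq, Pi.add_apply, mul_add, Finset.sum_add_distrib,
      ha x hx, hb x hx, add_zero]
  zero_mem' := by intro x hx; simp
  smul_mem' := by
    intro c r hr x hx
    simp only [Pi.smul_apply, MulOpposite.smul_eq_mul_unop, ← mul_assoc, ← Finset.sum_mul]
    rw [hr x hx, zero_mul]

end Perps


section Aux

open MulOpposite

variable {R : Type u} [Ring R]

theorem mem_rPerp' {I : Submodule Rᵐᵒᵖ (Fin 2 → R)} {x : Fin 2 → R} :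
    x ∈ rPerp I ↔ ∀ r ∈ I, ∑ i, x i * r i = 0 := Iff.rfl

theorem mem_lPerp' {X : Submodule R (Fin 2 → R)} {r : Fin 2 → R} :
    r ∈ lPerp X ↔ ∀ x ∈ X, ∑ i, x i * r i = 0 := Iff.rfl

/-- An `Rᵐᵒᵖ`-linear functional on `R²` is given by left multiplications. -/
theorem apply_eq_sum_op (φ : (Fin 2 → R) →ₗ[Rᵐᵒᵖ] R) (a : Fin 2 → R) :
    φ a = ∑ i, φ (Pi.single i 1) * a i := by
  have h : a = (op (a 0)) • (Pi.single 0 (1:R) : Fin 2 → R) + (op (a 1)) • (Pi.single 1 (1:R) : Fin 2 → R) := by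
    funext j; fin_cases j <;> simp [smul_eq_mul_unop]
  rw [Fin.sum_univ_two]
  conv_lhs => rw [h]
  rw [map_add, map_smul, map_smul]
  simp [smul_eq_mul_unop]

/-- An `R`-linear functional on `R²` is given by right multiplications. -/
theorem apply_eq_sum_l (φ : (Fin 2 → R) →ₗ[R] R) (a : Fin 2 → R) :
    φ a = ∑ i, a i * φ (Pi.single i 1) := by
  have h : a = (a 0) • (Pi.single 0 1 : Fin 2 → R) + (a 1) • (Pi.single 1 1 : Fin 2 → R) := by
    funext j; fin_cases j <;> simp
  rw [Fin.sum_univ_two]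
  conv_lhs => rw [h]
  rw [map_add, map_smul, map_smul]
  simp [mul_comm]

end Aux

section Fwd

open MulOpposite

variable {R : Type u} [Ring R]

theorem forward_right
    (cog : ∀ (P : Type u) [AddCommGroup P] [Module Rᵐᵒᵖ P],
      ∃ (J : Type u) (g : P →ₗ[Rᵐᵒᵖ] (J → R)), Function.Injective g)
    (I : Submodule Rᵐᵒᵖ (Fin 2 → R)) : lPerp (rPerp I) = I := by
  apply le_antisymm
  · intro r hr
    by_contra hrI
    obtain ⟨J, g, hg⟩ := cog ((Fin 2 → R) ⧸ I)
    have h0 : (Submodule.Quotient.mk r : (Fin 2 → R) ⧸ I) ≠ 0 := by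
      simpa [Submodule.Quotient.mk_eq_zero] using hrI
    have hgr : g (Submodule.Quotient.mk r) ≠ 0 := fun h => h0 (hg (by simpa using h))
    obtain ⟨j, hj⟩ : ∃ j, g (Submodule.Quotient.mk r : (Fin 2 → R) ⧸ I) j ≠ 0 := by
      by_contra h; push_neg at h; exact hgr (funext h)
    set φ : (Fin 2 → R) →ₗ[Rᵐᵒᵖ] R := (LinearMap.proj j).comp (g.comp I.mkQ) with hφ
    have hφI : ∀ a ∈ I, φ a = 0 := by
      intro a ha
      have : I.mkQ a = 0 := (Submodule.Quotient.mk_eq_zero I).2 ha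
      simp [hφ, LinearMap.comp_apply, this]
    have hx : (fun i => φ (Pi.single i 1)) ∈ rPerp I := by
      intro a ha
      rw [← apply_eq_sum_op]
      exact hφI a ha
    have hsum := hr _ hx
    rw [← apply_eq_sum_op] at hsum
    exact hj (by simpa [hφ, LinearMap.comp_apply] using hsum)
  · intro r hr x hx
    exact hx r hr

theorem forward_left
    (cog : ∀ (P : Type u) [AddCommGroup P] [Module R P],
      ∃ (J : Type u) (g : P →ₗ[R] (J → R)), Function.Injective g)
    (X : Submodule R (Fin 2 → R)) : rPerp (lPerp X) = X := by
  apply le_antisymm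
  · intro x hx
    by_contra hxX
    obtain ⟨J, g, hg⟩ := cog ((Fin 2 → R) ⧸ X)
    have h0 : (Submodule.Quotient.mk x : (Fin 2 → R) ⧸ X) ≠ 0 := by
      simpa [Submodule.Quotient.mk_eq_zero] using hxX
    have hgx : g (Submodule.Quotient.mk x) ≠ 0 := fun h => h0 (hg (by simpa using h))
    obtain ⟨j, hj⟩ : ∃ j, g (Submodule.Quotient.mk x : (Fin 2 → R) ⧸ X) j ≠ 0 := by
      by_contra h; push_neg at h; exact hgx (funext h)
    set φ : (Fin 2 → R) →ₗ[R] R := (LinearMap.proj j).comp (g.comp X.mkQ) with hφ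
    have hφX : ∀ a ∈ X, φ a = 0 := by
      intro a ha
      have : X.mkQ a = 0 := (Submodule.Quotient.mk_eq_zero X).2 ha
      simp [hφ, LinearMap.comp_apply, this]
    have hrmem : (fun i => φ (Pi.single i 1)) ∈ lPerp X := by
      intro a ha
      rw [← apply_eq_sum_l]
      exact hφX a ha
    have hsum := hx _ hrmem
    rw [← apply_eq_sum_l] at hsum
    exact hj (by simpa [hφ, LinearMap.comp_apply] using hsum)
  · intro x hx r hr
    exact hr x hx

end Fwd

section Ann

open MulOpposite

variable {R : Type u} [Ring R]

/-- `J × 0` as a right (`Rᵐᵒᵖ`) submodule of `R²`. -/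
def padO (J : Submodule Rᵐᵒᵖ R) : Submodule Rᵐᵒᵖ (Fin 2 → R) where
  carrier := {x | x 0 ∈ J ∧ x 1 = 0}
  add_mem' := by
    rintro a b ⟨ha0, ha1⟩ ⟨hb0, hb1⟩
    exact ⟨J.add_mem ha0 hb0, by simp [ha1, hb1]⟩
  zero_mem' := ⟨J.zero_mem, rfl⟩
  smul_mem' := by
    rintro c x ⟨hx0, hx1⟩
    exact ⟨J.smul_mem c hx0, by simp [hx1]⟩

/-- `J × 0` as a left submodule of `R²`. -/
def padL (J : Submodule R R) : Submodule R (Fin 2 → R) where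
  carrier := {x | x 0 ∈ J ∧ x 1 = 0}
  add_mem' := by
    rintro a b ⟨ha0, ha1⟩ ⟨hb0, hb1⟩
    exact ⟨J.add_mem ha0 hb0, by simp [ha1, hb1]⟩
  zero_mem' := ⟨J.zero_mem, rfl⟩
  smul_mem' := by
    rintro c x ⟨hx0, hx1⟩
    exact ⟨J.smul_mem c hx0, by simp [hx1]⟩

/-- Double annihilator property for right ideals, from the first perp condition. -/
theorem rl_le (h1 : ∀ K : Submodule Rᵐᵒᵖ (Fin 2 → R), lPerp (rPerp K) = K)
    (J : Submodule Rᵐᵒᵖ R) (t : R) (ht : ∀ c : R, (∀ j ∈ J, c * j = 0) → c * t = 0) :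
    t ∈ J := by
  have key : (fun i => if i = 0 then t else 0 : Fin 2 → R) ∈ lPerp (rPerp (padO J)) := by
    intro y hy
    have hy0 : ∀ j ∈ J, y 0 * j = 0 := by
      intro j hj
      have := hy (fun i => if i = 0 then j else 0) ⟨by simpa using hj, by simp⟩
      simpa [Fin.sum_univ_two] using this
    have := ht (y 0) hy0
    simpa [Fin.sum_univ_two] using this
  rw [h1] at key
  simpa using key.1

/-- Double annihilator property for left ideals, from the second perp condition. -/
theorem lr_le (h2 : ∀ X : Submodule R (Fin 2 → R), rPerp (lPerp X) = X)
    (J : Submodule R R) (c : R) (hc : ∀ t : R, (∀ j ∈ J, j * t = 0) → c * t = 0) :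
    c ∈ J := by
  have key : (fun i => if i = 0 then c else 0 : Fin 2 → R) ∈ rPerp (lPerp (padL J)) := by
    intro r hr
    have hr0 : ∀ j ∈ J, j * r 0 = 0 := by
      intro j hj
      have := hr (fun i => if i = 0 then j else 0) ⟨by simpa using hj, by simp⟩
      simpa [Fin.sum_univ_two] using this
    have := hc (r 0) hr0
    simpa [Fin.sum_univ_two] using this
  rw [h2] at key
  simpa using key.1

theorem right_ann_ne (h1 : ∀ K : Submodule Rᵐᵒᵖ (Fin 2 → R), lPerp (rPerp K) = K)
    (J : Submodule Rᵐᵒᵖ R) (hJ : J ≠ ⊤) : ∃ c ≠ 0, ∀ j ∈ J, c * j = 0 := by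
  by_contra h
  push_neg at h
  apply hJ
  rw [eq_top_iff]
  intro t _
  refine rl_le h1 J t fun c hc => ?_
  have hc0 : c = 0 := by
    by_contra hne
    obtain ⟨j, hj, hjj⟩ := h c hne
    exact hjj (hc j hj)
  simp [hc0]

theorem left_ann_ne (h2 : ∀ X : Submodule R (Fin 2 → R), rPerp (lPerp X) = X)
    (J : Submodule R R) (hJ : J ≠ ⊤) : ∃ t ≠ 0, ∀ j ∈ J, j * t = 0 := by
  by_contra h
  push_neg at h
  apply hJ
  rw [eq_top_iff]
  intro c _
  refine lr_le h2 J c fun t htt => ?_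
  have ht0 : t = 0 := by
    by_contra hne
    obtain ⟨j, hj, hjj⟩ := h t hne
    exact hjj (htt j hj)
  simp [ht0]

end Ann

section Inj

open MulOpposite

variable {R : Type u} [Ring R]

/-- Graph of a map from a right ideal, as a right submodule of `R²`. -/
def graphO (I : Ideal Rᵐᵒᵖ) (g : I →ₗ[Rᵐᵒᵖ] R) : I →ₗ[Rᵐᵒᵖ] (Fin 2 → R) where
  toFun a := ![unop (a : Rᵐᵒᵖ), g a]
  map_add' a b := by funext i; fin_cases i <;> simp
  map_smul' c a := by
    funext i
    fin_cases i <;> simp [smul_eq_mul_unop]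

/-- Graph of a map from a left ideal, as a left submodule of `R²`. -/
def graphL (I : Ideal R) (g : I →ₗ[R] R) : I →ₗ[R] (Fin 2 → R) where
  toFun a := ![(a : R), g a]
  map_add' a b := by funext i; fin_cases i <;> simp
  map_smul' c a := by funext i; fin_cases i <;> simp

theorem baer_op (h1 : ∀ K : Submodule Rᵐᵒᵖ (Fin 2 → R), lPerp (rPerp K) = K)
    (h2 : ∀ X : Submodule R (Fin 2 → R), rPerp (lPerp X) = X) :
    Module.Baer Rᵐᵒᵖ R := by
  intro I g
  set K := LinearMap.range (graphO I g) with hK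
  by_cases hex : ∃ c : R, ∀ (a : Rᵐᵒᵖ) (ha : a ∈ I), g ⟨a, ha⟩ = c * unop a
  · obtain ⟨c, hc⟩ := hex
    refine ⟨LinearMap.toSpanSingleton Rᵐᵒᵖ R c, fun x mem => ?_⟩
    rw [hc x mem, LinearMap.toSpanSingleton_apply, smul_eq_mul_unop]
  · exfalso
    push_neg at hex
    set J : Submodule R R := (rPerp K).map (LinearMap.proj 1) with hJdef
    have hJ : J ≠ ⊤ := by
      intro htop
      have hm : (-1 : R) ∈ J := htop ▸ Submodule.mem_top
      obtain ⟨x, hx, hx1⟩ := hm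
      simp only [LinearMap.proj_apply] at hx1
      obtain ⟨a, ha, hne⟩ := hex (x 0)
      have hs := hx (graphO I g ⟨a, ha⟩) ⟨⟨a, ha⟩, rfl⟩
      rw [Fin.sum_univ_two] at hs
      simp only [graphO, LinearMap.coe_mk, AddHom.coe_mk, Matrix.cons_val_zero,
        Matrix.cons_val_one, Matrix.head_cons] at hs
      rw [hx1, neg_one_mul] at hs
      exact hne (add_neg_eq_zero.mp hs).symm
    obtain ⟨t, ht0, htann⟩ := left_ann_ne h2 J hJ
    have hmem : (fun i => if i = 0 then 0 else t : Fin 2 → R) ∈ lPerp (rPerp K) := by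
      intro x hx
      have hx1J : x 1 ∈ J := ⟨x, hx, rfl⟩
      rw [Fin.sum_univ_two]
      simp [htann _ hx1J]
    rw [h1] at hmem
    obtain ⟨⟨a, ha⟩, hgraph⟩ := hmem
    have h0 : unop a = 0 := by
      have := congrFun hgraph 0
      simpa [graphO] using this
    have hg1 : g ⟨a, ha⟩ = t := by
      have := congrFun hgraph 1
      simpa [graphO] using this
    have ha0 : (⟨a, ha⟩ : I) = 0 := Subtype.ext (unop_injective (by simpa using h0))
    exact ht0 (by rw [← hg1, ha0, map_zero])

theorem baer_l (h1 : ∀ K : Submodule Rᵐᵒᵖ (Fin 2 → R), lPerp (rPerp K) = K)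
    (h2 : ∀ X : Submodule R (Fin 2 → R), rPerp (lPerp X) = X) :
    Module.Baer R R := by
  intro I g
  set X := LinearMap.range (graphL I g) with hX
  by_cases hex : ∃ c : R, ∀ (a : R) (ha : a ∈ I), g ⟨a, ha⟩ = a * c
  · obtain ⟨c, hc⟩ := hex
    refine ⟨LinearMap.toSpanSingleton R R c, fun x mem => ?_⟩
    rw [hc x mem, LinearMap.toSpanSingleton_apply, smul_eq_mul]
  · exfalso
    push_neg at hex
    set J : Submodule Rᵐᵒᵖ R := (lPerp X).map (LinearMap.proj 1) with hJdef
    have hJ : J ≠ ⊤ := by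
      intro htop
      have hm : (-1 : R) ∈ J := htop ▸ Submodule.mem_top
      obtain ⟨r, hr, hr1⟩ := hm
      simp only [LinearMap.proj_apply] at hr1
      obtain ⟨a, ha, hne⟩ := hex (r 0)
      have hs := hr (graphL I g ⟨a, ha⟩) ⟨⟨a, ha⟩, rfl⟩
      rw [Fin.sum_univ_two] at hs
      simp only [graphL, LinearMap.coe_mk, AddHom.coe_mk, Matrix.cons_val_zero,
        Matrix.cons_val_one, Matrix.head_cons] at hs
      rw [hr1, mul_neg_one] at hs
      exact hne (add_neg_eq_zero.mp hs).symm
    obtain ⟨t, ht0, htann⟩ := right_ann_ne h1 J hJ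
    have hmem : (![0, t] : Fin 2 → R) ∈ rPerp (lPerp X) := by
      intro r hrr
      have hr1J : r 1 ∈ J := ⟨r, hrr, rfl⟩
      rw [Fin.sum_univ_two]
      simp [htann _ hr1J]
    rw [h2] at hmem
    obtain ⟨⟨a, ha⟩, hgraph⟩ := hmem
    have h0 : a = 0 := by
      have := congrFun hgraph 0
      simpa [graphL] using this
    have hg1 : g ⟨a, ha⟩ = t := by
      have := congrFun hgraph 1
      simpa [graphL] using this
    have ha0 : (⟨a, ha⟩ : I) = 0 := Subtype.ext h0
    exact ht0 (by rw [← hg1, ha0, map_zero])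

end Inj

section Cog

open MulOpposite LinearMap

variable {R : Type u} [Ring R]

theorem sep_op (inj : Module.Injective Rᵐᵒᵖ R)
    (h1 : ∀ K : Submodule Rᵐᵒᵖ (Fin 2 → R), lPerp (rPerp K) = K)
    (P : Type u) [AddCommGroup P] [Module Rᵐᵒᵖ P] (p : P) (hp : p ≠ 0) :
    ∃ φ : P →ₗ[Rᵐᵒᵖ] R, φ p ≠ 0 := by
  set τ := LinearMap.toSpanSingleton Rᵐᵒᵖ P p with hτ
  have hne : LinearMap.ker τ ≠ ⊤ := by
    intro htop
    apply hp
    have : (1 : Rᵐᵒᵖ) ∈ LinearMap.ker τ := htop ▸ Submodule.mem_top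
    simpa [hτ, LinearMap.toSpanSingleton_apply] using this
  obtain ⟨m, hmax, hle⟩ := Ideal.exists_le_maximal _ hne
  set unopL := LinearMap.toSpanSingleton Rᵐᵒᵖ R 1 with hunopL
  have hunop : ∀ a : Rᵐᵒᵖ, unopL a = unop a := fun a => by
    simp [hunopL, LinearMap.toSpanSingleton_apply, smul_eq_mul_unop]
  set J : Submodule Rᵐᵒᵖ R := Submodule.map unopL m with hJ
  have hJne : J ≠ ⊤ := by
    intro htop
    apply hmax.ne_top
    rw [eq_top_iff]
    intro y _
    have : unop y ∈ J := htop ▸ Submodule.mem_top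
    obtain ⟨z, hz, hzy⟩ := this
    rw [hunop z] at hzy
    rwa [show y = z from unop_injective hzy.symm]
  obtain ⟨c, hc0, hcann⟩ := right_ann_ne h1 J hJne
  set σ := LinearMap.toSpanSingleton Rᵐᵒᵖ R c with hσ
  have hker : LinearMap.ker τ ≤ LinearMap.ker σ := by
    intro a haa
    have : unop a ∈ J := ⟨a, hle haa, hunop a⟩
    simp only [hσ, LinearMap.mem_ker, LinearMap.toSpanSingleton_apply, smul_eq_mul_unop]
    exact hcann _ this
  set e := LinearMap.quotKerEquivRange τ with he
  set lift := Submodule.liftQ (LinearMap.ker τ) σ hker with hlift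
  set φ₀ : LinearMap.range τ →ₗ[Rᵐᵒᵖ] R := lift.comp e.symm.toLinearMap with hφ₀
  obtain ⟨φ, hφ⟩ := inj.out (LinearMap.range τ).subtype (Submodule.injective_subtype _) φ₀
  have hpmem : p ∈ LinearMap.range τ := ⟨1, by simp [hτ, LinearMap.toSpanSingleton_apply]⟩
  refine ⟨φ, ?_⟩
  have h1' : φ p = φ₀ ⟨p, hpmem⟩ := hφ ⟨p, hpmem⟩
  have h2' : e (Submodule.Quotient.mk 1) = ⟨p, hpmem⟩ := by
    apply Subtype.ext
    simp [he, LinearMap.quotKerEquivRange, hτ, LinearMap.toSpanSingleton_apply]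
  have h4' : e.symm ⟨p, hpmem⟩ = Submodule.Quotient.mk 1 := by
    rw [LinearEquiv.symm_apply_eq, h2']
  have h3' : φ₀ ⟨p, hpmem⟩ = lift (Submodule.Quotient.mk 1) := by
    rw [hφ₀, LinearMap.comp_apply, LinearEquiv.coe_toLinearMap, h4']
  rw [h1', h3', hlift, Submodule.liftQ_apply]
  simpa [hσ, LinearMap.toSpanSingleton_apply, smul_eq_mul_unop] using hc0

theorem sep_l (inj : Module.Injective R R)
    (h2 : ∀ X : Submodule R (Fin 2 → R), rPerp (lPerp X) = X)
    (P : Type u) [AddCommGroup P] [Module R P] (p : P) (hp : p ≠ 0) :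
    ∃ φ : P →ₗ[R] R, φ p ≠ 0 := by
  set τ := LinearMap.toSpanSingleton R P p with hτ
  have hne : LinearMap.ker τ ≠ ⊤ := by
    intro htop
    apply hp
    have : (1 : R) ∈ LinearMap.ker τ := htop ▸ Submodule.mem_top
    simpa [hτ, LinearMap.toSpanSingleton_apply] using this
  obtain ⟨m, hmax, hle⟩ := Ideal.exists_le_maximal _ hne
  obtain ⟨c, hc0, hcann⟩ := left_ann_ne h2 m hmax.ne_top
  set σ := LinearMap.toSpanSingleton R R c with hσ
  have hker : LinearMap.ker τ ≤ LinearMap.ker σ := by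
    intro a haa
    simp only [hσ, LinearMap.mem_ker, LinearMap.toSpanSingleton_apply, smul_eq_mul]
    exact hcann _ (hle haa)
  set e := LinearMap.quotKerEquivRange τ with he
  set lift := Submodule.liftQ (LinearMap.ker τ) σ hker with hlift
  set φ₀ : LinearMap.range τ →ₗ[R] R := lift.comp e.symm.toLinearMap with hφ₀
  obtain ⟨φ, hφ⟩ := inj.out (LinearMap.range τ).subtype (Submodule.injective_subtype _) φ₀
  have hpmem : p ∈ LinearMap.range τ := ⟨1, by simp [hτ, LinearMap.toSpanSingleton_apply]⟩
  refine ⟨φ, ?_⟩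
  have h1' : φ p = φ₀ ⟨p, hpmem⟩ := hφ ⟨p, hpmem⟩
  have h2' : e (Submodule.Quotient.mk 1) = ⟨p, hpmem⟩ := by
    apply Subtype.ext
    simp [he, LinearMap.quotKerEquivRange, hτ, LinearMap.toSpanSingleton_apply]
  have h4' : e.symm ⟨p, hpmem⟩ = Submodule.Quotient.mk 1 := by
    rw [LinearEquiv.symm_apply_eq, h2']
  have h3' : φ₀ ⟨p, hpmem⟩ = lift (Submodule.Quotient.mk 1) := by
    rw [hφ₀, LinearMap.comp_apply, LinearEquiv.coe_toLinearMap, h4']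
  rw [h1', h3', hlift, Submodule.liftQ_apply]
  simpa [hσ, LinearMap.toSpanSingleton_apply] using hc0

theorem cog_op (inj : Module.Injective Rᵐᵒᵖ R)
    (h1 : ∀ K : Submodule Rᵐᵒᵖ (Fin 2 → R), lPerp (rPerp K) = K)
    (P : Type u) [AddCommGroup P] [Module Rᵐᵒᵖ P] :
    ∃ (J : Type u) (g : P →ₗ[Rᵐᵒᵖ] (J → R)), Function.Injective g := by
  refine ⟨P →ₗ[Rᵐᵒᵖ] R, LinearMap.pi (fun φ => φ), ?_⟩
  intro p q h
  by_contra hne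
  obtain ⟨φ, hφ⟩ := sep_op inj h1 P (p - q) (sub_ne_zero.2 hne)
  apply hφ
  rw [map_sub, sub_eq_zero]
  exact congrFun h φ

theorem cog_l (inj : Module.Injective R R)
    (h2 : ∀ X : Submodule R (Fin 2 → R), rPerp (lPerp X) = X)
    (P : Type u) [AddCommGroup P] [Module R P] :
    ∃ (J : Type u) (g : P →ₗ[R] (J → R)), Function.Injective g := by
  refine ⟨P →ₗ[R] R, LinearMap.pi (fun φ => φ), ?_⟩
  intro p q h
  by_contra hne
  obtain ⟨φ, hφ⟩ := sep_l inj h2 P (p - q) (sub_ne_zero.2 hne)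
  apply hφ
  rw [map_sub, sub_eq_zero]
  exact congrFun h φ

end Cog

/-- `R` is a two-sided PF ring (an injective cogenerator as a right module and as a left
module over itself) iff `R²` has orthogonal equivalence: `(X^⊥)^⊥ = X` for every right
submodule and every left submodule of `R²`, orthogonals taken via `(R²)* ≅ R²`. -/
theorem stmt18 {R : Type u} [Ring R] :
    (Module.Injective Rᵐᵒᵖ R ∧
      (∀ (P : Type u) [AddCommGroup P] [Module Rᵐᵒᵖ P],
        ∃ (I : Type u) (g : P →ₗ[Rᵐᵒᵖ] (I → R)), Function.Injective g) ∧
     Module.Injective R R ∧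
      (∀ (P : Type u) [AddCommGroup P] [Module R P],
        ∃ (I : Type u) (g : P →ₗ[R] (I → R)), Function.Injective g)) ↔
    ((∀ I : Submodule Rᵐᵒᵖ (Fin 2 → R), lPerp (rPerp I) = I) ∧
     (∀ X : Submodule R (Fin 2 → R), rPerp (lPerp X) = X)) := by
  constructor
  · rintro ⟨_, cogO, _, cogL⟩
    exact ⟨forward_right cogO, forward_left cogL⟩
  · rintro ⟨h1, h2⟩
    have injO : Module.Injective Rᵐᵒᵖ R := (baer_op h1 h2).injective
    have injL : Module.Injective R R := (baer_l h1 h2).injective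
    exact ⟨injO, cog_op injO h1, injL, cog_l injL h2⟩
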